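/- Let τ : Fin m → Fin r be a subword pattern and let φ be the shuffle pattern τ-ℓ-τ (where ℓ is greater than every letter of τ and the letters of the two copies of τ are mutually incomparable). Then for all k ≥ 1, in ℚ[[x]]: A_φ(x;k)·(1 − x·A_τ(x;k−1))² = A_φ(x;k−1) − x·A_τ(x;k−1)². -/

import Mathlib

/-- A word `σ : Fin n → Fin k` has an occurrence of the subword pattern `p : Fin m → Fin l`
at position `i` if `i + m ≤ n` and the corresponding letters are order-isomorphic to `p`. -/
def OccursAt {m l n k : ℕ} (p : Fin m → Fin l) (σ : Fin n → Fin k) (i : ℕ) : Prop :=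
  ∃ h : i + m ≤ n, ∀ a b : Fin m,
    (σ ⟨i + a, lt_of_lt_of_le (Nat.add_lt_add_left a.isLt i) h⟩ <
      σ ⟨i + b, lt_of_lt_of_le (Nat.add_lt_add_left b.isLt i) h⟩) ↔ p a < p b

/-- `σ` avoids the subword pattern `p`. -/
def AvoidsPat {m l n k : ℕ} (p : Fin m → Fin l) (σ : Fin n → Fin k) : Prop :=
  ∀ i : ℕ, ¬ OccursAt p σ i

/-- `σ` contains the shuffle pattern `τ-ℓ-ν`: there are an occurrence of `τ` at `i`,
a later position `pp` carrying a letter larger than all letters of the two occurrences,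
and a still later occurrence of `ν` at `q`. -/
def ContainsShuffle {m₁ r₁ m₂ r₂ n k : ℕ} (τ : Fin m₁ → Fin r₁) (ν : Fin m₂ → Fin r₂)
    (σ : Fin n → Fin k) : Prop :=
  ∃ (i pp q : ℕ) (hp : pp < n),
    i + m₁ ≤ pp ∧ pp < q ∧ q + m₂ ≤ n ∧ OccursAt τ σ i ∧ OccursAt ν σ q ∧
      ∀ (r : ℕ) (hr : r < n),
        ((i ≤ r ∧ r < i + m₁) ∨ (q ≤ r ∧ r < q + m₂)) → σ ⟨r, hr⟩ < σ ⟨pp, hp⟩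

/-- Generating function for the number of `k`-ary words avoiding the subword pattern `p`. -/
noncomputable def Apat {m l : ℕ} (p : Fin m → Fin l) (k : ℕ) : PowerSeries ℚ :=
  PowerSeries.mk fun n => (Nat.card {σ : Fin n → Fin k // AvoidsPat p σ} : ℚ)

/-- Generating function for the number of `k`-ary words avoiding the shuffle pattern
`τ-ℓ-ν`. -/
noncomputable def Ashuffle {m₁ r₁ m₂ r₂ : ℕ} (τ : Fin m₁ → Fin r₁) (ν : Fin m₂ → Fin r₂)
    (k : ℕ) : PowerSeries ℚ :=
  PowerSeries.mk fun n => (Nat.card {σ : Fin n → Fin k // ¬ ContainsShuffle τ ν σ} : ℚ)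

-- congruence lemma
theorem occursAt_congr' {m l : ℕ} {p : Fin m → Fin l} {n k n' k' : ℕ} {σ : Fin n → Fin k}
    {σ' : Fin n' → Fin k'} {i i' : ℕ} (h : i + m ≤ n) (h' : i' + m ≤ n')
    (hv : ∀ a b : Fin m,
      ((σ ⟨i + a, lt_of_lt_of_le (Nat.add_lt_add_left a.isLt i) h⟩ <
        σ ⟨i + b, lt_of_lt_of_le (Nat.add_lt_add_left b.isLt i) h⟩) ↔
      (σ' ⟨i' + a, lt_of_lt_of_le (Nat.add_lt_add_left a.isLt i') h'⟩ <
        σ' ⟨i' + b, lt_of_lt_of_le (Nat.add_lt_add_left b.isLt i') h'⟩))) :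
    OccursAt p σ i ↔ OccursAt p σ' i' := by
  constructor
  · rintro ⟨h2, ho⟩; exact ⟨h', fun a b => ((hv a b).symm.trans (ho a b))⟩
  · rintro ⟨h2, ho⟩; exact ⟨h, fun a b => ((hv a b).trans (ho a b))⟩

theorem occursAt_comap {m l : ℕ} {p : Fin m → Fin l} {n k k' : ℕ} {f : Fin k → Fin k'}
    (hf : StrictMono f) {σ : Fin n → Fin k} {i : ℕ} :
    OccursAt p (f ∘ σ) i ↔ OccursAt p σ i := by
  simp only [OccursAt, Function.comp, hf.lt_iff_lt]

theorem containsShuffle_comap {m₁ r₁ m₂ r₂ n k k' : ℕ} {τ : Fin m₁ → Fin r₁}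
    {ν : Fin m₂ → Fin r₂} {f : Fin k → Fin k'} (hf : StrictMono f) {σ : Fin n → Fin k} :
    ContainsShuffle τ ν (f ∘ σ) ↔ ContainsShuffle τ ν σ := by
  simp only [ContainsShuffle, OccursAt, Function.comp, hf.lt_iff_lt]

theorem avoidsPat_comap {m l n k k' : ℕ} {p : Fin m → Fin l} {f : Fin k → Fin k'}
    (hf : StrictMono f) {σ : Fin n → Fin k} :
    AvoidsPat p (f ∘ σ) ↔ AvoidsPat p σ := by
  simp only [AvoidsPat, occursAt_comap hf]

section Splice
variable {K n : ℕ}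

def splice (i : ℕ) (hi : i < n) (α : Fin i → Fin K) (β : Fin (n - i - 1) → Fin (K + 1)) :
    Fin n → Fin (K + 1) :=
  fun j => if h1 : (j : ℕ) < i then (α ⟨j, h1⟩).castSucc
    else if h2 : (j : ℕ) = i then Fin.last K
    else β ⟨(j : ℕ) - i - 1, by have := j.isLt; omega⟩

variable {i : ℕ} (hi : i < n) (α : Fin i → Fin K) (β : Fin (n - i - 1) → Fin (K + 1))

theorem splice_lt {j : ℕ} (h : j < i) (hj : j < n) :
    splice i hi α β ⟨j, hj⟩ = (α ⟨j, h⟩).castSucc := dif_pos h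

theorem splice_self : splice i hi α β ⟨i, hi⟩ = Fin.last K := by
  simp [splice]

theorem splice_gt {j : ℕ} (h : i < j) (hj : j < n) :
    splice i hi α β ⟨j, hj⟩ = β ⟨j - i - 1, by omega⟩ := by
  have h1 : ¬ (j < i) := by omega
  have h2 : ¬ (j = i) := by omega
  simp [splice, h1, h2]

theorem splice_shift {b : ℕ} (hb : b < n - i - 1) :
    splice i hi α β ⟨i + 1 + b, by omega⟩ = β ⟨b, hb⟩ := by
  rw [splice_gt hi α β (by omega) (by omega)]
  apply congrArg
  ext
  simp only [Fin.val_mk]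
  omega

end Splice

section Occ
variable {m l K n : ℕ} {p : Fin m → Fin l} {i : ℕ} {hi : i < n}
  {α : Fin i → Fin K} {β : Fin (n - i - 1) → Fin (K + 1)}

theorem occursAt_splice_left {j : ℕ} (h : j + m ≤ i) :
    OccursAt p (splice i hi α β) j ↔ OccursAt p α j := by
  refine occursAt_congr' (by omega) h (fun a b => ?_)
  rw [splice_lt hi α β (show (j + (a:ℕ)) < i by have := a.isLt; omega) (by omega),
      splice_lt hi α β (show (j + (b:ℕ)) < i by have := b.isLt; omega) (by omega)]
  exact Fin.castSucc_lt_castSucc_iff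

theorem occursAt_splice_right {j : ℕ} (h : j + m ≤ n - i - 1) :
    OccursAt p (splice i hi α β) (i + 1 + j) ↔ OccursAt p β j := by
  have key : ∀ c : Fin m, splice i hi α β
      ⟨i + 1 + j + (c : ℕ), by have := c.isLt; omega⟩ =
      β ⟨j + (c : ℕ), by have := c.isLt; omega⟩ := by
    intro c
    rw [splice_gt hi α β (by omega) (by have := c.isLt; omega)]
    apply congrArg
    ext
    simp only [Fin.val_mk]
    omega
  refine occursAt_congr' (by omega) h (fun a b => ?_)
  rw [key a, key b]

end Occ

section Main
variable {m r K n : ℕ} (τ : Fin m → Fin r)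

/-- every occurrence of τ contains a top letter ("blocks avoid τ") -/
def DP (σ : Fin n → Fin (K + 1)) : Prop :=
  ∀ i : ℕ, OccursAt τ σ i →
    ∃ (j : ℕ) (hj : j < n), i ≤ j ∧ j < i + m ∧ σ ⟨j, hj⟩ = Fin.last K

def embW (σ : Fin n → Fin K) : Fin n → Fin (K + 1) := fun j => (σ j).castSucc

theorem cs_embW {σ : Fin n → Fin K} :
    ContainsShuffle τ τ (embW σ) ↔ ContainsShuffle τ τ σ :=
  containsShuffle_comap Fin.strictMono_castSucc

theorem avoids_embW {σ : Fin n → Fin K} : AvoidsPat τ (embW σ) ↔ AvoidsPat τ σ :=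
  avoidsPat_comap Fin.strictMono_castSucc

theorem dp_embW {σ : Fin n → Fin K} : DP τ (embW σ) ↔ AvoidsPat τ σ := by
  constructor
  · intro hd i hocc
    obtain ⟨j, hj, -, -, hlast⟩ := hd i ((occursAt_comap Fin.strictMono_castSucc).mpr hocc)
    exact absurd hlast (Fin.castSucc_lt_last _).ne
  · intro ha i hocc
    exact absurd ((occursAt_comap Fin.strictMono_castSucc).mp hocc) (ha i)

theorem avoids_not_cs {k' : ℕ} {σ : Fin n → Fin k'} (h : AvoidsPat τ σ) :
    ¬ ContainsShuffle τ τ σ := by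
  rintro ⟨a, pp, q, hp, h1, h2, h3, o1, o2, hdom⟩
  exact h a o1

theorem dp_not_cs {σ : Fin n → Fin (K + 1)} (h : DP τ σ) :
    ¬ ContainsShuffle τ τ σ := by
  rintro ⟨a, pp, q, hp, h1, h2, h3, o1, o2, hdom⟩
  obtain ⟨j, hj, hj1, hj2, hlast⟩ := h a o1
  have := hdom j hj (Or.inl ⟨hj1, hj2⟩)
  rw [hlast] at this
  exact absurd this (Fin.le_last _).not_gt

end Main

section SpliceMain
variable {m r K n : ℕ} (τ : Fin m → Fin r) {i : ℕ} {hi : i < n}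
  {α : Fin i → Fin K} {β : Fin (n - i - 1) → Fin (K + 1)}

theorem cs_splice_of_left (h : ContainsShuffle τ τ α) :
    ContainsShuffle τ τ (splice i hi α β) := by
  obtain ⟨a, pp, q, hp, h1, h2, h3, o1, o2, hdom⟩ := h
  refine ⟨a, pp, q, by omega, h1, h2, by omega, (occursAt_splice_left (by omega)).mpr o1,
    (occursAt_splice_left (by omega)).mpr o2, ?_⟩
  intro s hs hw
  have hsi : s < i := by rcases hw with ⟨w1, w2⟩ | ⟨w1, w2⟩ <;> omega
  rw [splice_lt hi α β hsi hs, splice_lt hi α β hp (by omega)]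
  exact Fin.castSucc_lt_castSucc_iff.mpr (hdom s hsi hw)

theorem cs_splice_of_right (h : ContainsShuffle τ τ β) :
    ContainsShuffle τ τ (splice i hi α β) := by
  obtain ⟨a, pp, q, hp, h1, h2, h3, o1, o2, hdom⟩ := h
  refine ⟨i + 1 + a, i + 1 + pp, i + 1 + q, by omega, by omega, by omega, by omega,
    (occursAt_splice_right (by omega)).mpr o1, (occursAt_splice_right (by omega)).mpr o2, ?_⟩
  intro s hs hw
  have hsgt : i < s := by rcases hw with ⟨w1, w2⟩ | ⟨w1, w2⟩ <;> omega
  have hdb := hdom (s - i - 1) (by omega)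
    (by rcases hw with ⟨w1, w2⟩ | ⟨w1, w2⟩
        · exact Or.inl ⟨by omega, by omega⟩
        · exact Or.inr ⟨by omega, by omega⟩)
  rw [splice_gt hi α β hsgt hs, splice_gt hi α β (by omega) (by omega)]
  have e1 : (⟨i + 1 + pp - i - 1, by omega⟩ : Fin (n - i - 1)) = ⟨pp, hp⟩ := by
    ext; simp only [Fin.val_mk]; omega
  rw [e1]
  exact hdb

theorem cs_splice_of_mid (h1 : ¬ AvoidsPat τ α) (h2 : ¬ DP τ β) :
    ContainsShuffle τ τ (splice i hi α β) := by
  rw [AvoidsPat] at h1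
  push_neg at h1
  obtain ⟨a, o1⟩ := h1
  rw [DP] at h2
  push_neg at h2
  obtain ⟨j, oj, hfree⟩ := h2
  obtain ⟨ham, hoa⟩ := id o1
  obtain ⟨hjm, hoj⟩ := id oj
  refine ⟨a, i, i + 1 + j, hi, by omega, by omega, by omega,
    (occursAt_splice_left ham).mpr o1, (occursAt_splice_right hjm).mpr oj, ?_⟩
  intro s hs hw
  rw [splice_self]
  rcases hw with ⟨w1, w2⟩ | ⟨w1, w2⟩
  · rw [splice_lt hi α β (by omega) hs]
    exact Fin.castSucc_lt_last _
  · rw [splice_gt hi α β (by omega) hs]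
    exact Fin.lt_last_iff_ne_last.mpr (hfree (s - i - 1) (by omega) (by omega) (by omega))

theorem cs_splice_iff :
    ContainsShuffle τ τ (splice i hi α β) ↔
      ContainsShuffle τ τ α ∨ ContainsShuffle τ τ β ∨ (¬ AvoidsPat τ α ∧ ¬ DP τ β) := by
  constructor
  · rintro ⟨a, pp, q, hp, h1, h2, h3, o1, o2, hdom⟩
    have htop : ∀ (s : ℕ) (hs : s < n), ((a ≤ s ∧ s < a + m) ∨ (q ≤ s ∧ s < q + m)) →
        splice i hi α β ⟨s, hs⟩ < Fin.last K := fun s hs hw =>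
      lt_of_lt_of_le (hdom s hs hw) (Fin.le_last _)
    have hai : a + m ≤ i ∨ i < a := by
      by_contra hc
      push_neg at hc
      have := htop i hi (Or.inl ⟨by omega, by omega⟩)
      rw [splice_self] at this
      exact lt_irrefl _ this
    have hqi : q + m ≤ i ∨ i < q := by
      by_contra hc
      push_neg at hc
      have := htop i hi (Or.inr ⟨by omega, by omega⟩)
      rw [splice_self] at this
      exact lt_irrefl _ this
    rcases hai with hai | hai
    · have o1' := (occursAt_splice_left (hi := hi) (α := α) (β := β) hai).mp o1
      rcases hqi with hqi | hqi
      · left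
        have hppi : pp < i := by omega
        refine ⟨a, pp, q, hppi, h1, h2, hqi, o1', (occursAt_splice_left hqi).mp o2, ?_⟩
        intro s hs hw
        have h5 := hdom s (by omega) hw
        rw [splice_lt hi α β hs (by omega), splice_lt hi α β hppi (by omega)] at h5
        exact Fin.castSucc_lt_castSucc_iff.mp h5
      · right; right
        refine ⟨fun hav => hav a o1', fun hdp => ?_⟩
        have hq' : i + 1 + (q - i - 1) = q := by omega
        rw [← hq'] at o2
        have o2' := (occursAt_splice_right (hi := hi) (α := α) (β := β) (by omega)).mp o2
        obtain ⟨jj, hjj, hj1, hj2, hlast⟩ := hdp (q - i - 1) o2'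
        have hx := htop (i + 1 + jj) (by omega) (Or.inr ⟨by omega, by omega⟩)
        rw [splice_shift hi α β hjj, hlast] at hx
        exact lt_irrefl _ hx
    · right; left
      have hqgt : i < q := by omega
      have ha' : i + 1 + (a - i - 1) = a := by omega
      have hq' : i + 1 + (q - i - 1) = q := by omega
      rw [← ha'] at o1
      rw [← hq'] at o2
      have o1' := (occursAt_splice_right (hi := hi) (α := α) (β := β) (by omega)).mp o1
      have o2' := (occursAt_splice_right (hi := hi) (α := α) (β := β) (by omega)).mp o2
      refine ⟨a - i - 1, pp - i - 1, q - i - 1, by omega, by omega, by omega, by omega,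
        o1', o2', ?_⟩
      intro s hs hw
      have h5 := hdom (i + 1 + s) (by omega)
        (by rcases hw with ⟨w1, w2⟩ | ⟨w1, w2⟩
            · exact Or.inl ⟨by omega, by omega⟩
            · exact Or.inr ⟨by omega, by omega⟩)
      rw [splice_shift hi α β hs, splice_gt hi α β (by omega) (by omega)] at h5
      have e1 : (⟨pp - i - 1, by omega⟩ : Fin (n - i - 1)) = ⟨pp - i - 1, by omega⟩ := rfl
      exact h5
  · rintro (h | h | ⟨h1, h2⟩)
    exacts [cs_splice_of_left τ h, cs_splice_of_right τ h, cs_splice_of_mid τ h1 h2]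

theorem dp_splice_iff : DP τ (splice i hi α β) ↔ AvoidsPat τ α ∧ DP τ β := by
  constructor
  · intro hd
    constructor
    · intro a o1
      have ham : a + m ≤ i := o1.1
      obtain ⟨j, hj, hj1, hj2, hlast⟩ := hd a ((occursAt_splice_left ham).mpr o1)
      have hji : j < i := by omega
      rw [splice_lt hi α β hji hj] at hlast
      exact (Fin.castSucc_lt_last _).ne hlast
    · intro a o1
      have ham : a + m ≤ n - i - 1 := o1.1
      obtain ⟨j, hj, hj1, hj2, hlast⟩ := hd (i + 1 + a) ((occursAt_splice_right ham).mpr o1)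
      have hji : i < j := by omega
      refine ⟨j - i - 1, by omega, by omega, by omega, ?_⟩
      rw [splice_gt hi α β hji hj] at hlast
      exact hlast
  · rintro ⟨ha, hd⟩ a o1
    have ham : a + m ≤ n := o1.1
    rcases (show a + m ≤ i ∨ (a ≤ i ∧ i < a + m) ∨ i < a by omega) with h | h | h
    · exact absurd ((occursAt_splice_left h).mp o1) (ha a)
    · exact ⟨i, hi, h.1, h.2, splice_self hi α β⟩
    · have ha' : i + 1 + (a - i - 1) = a := by omega
      rw [← ha'] at o1
      obtain ⟨j, hj, hj1, hj2, hlast⟩ := hd (a - i - 1)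
        ((occursAt_splice_right (by omega)).mp o1)
      refine ⟨i + 1 + j, by omega, by omega, by omega, ?_⟩
      rw [splice_shift hi α β hj]
      exact hlast

end SpliceMain

section Bij
variable {K n : ℕ}

def FF : ((Fin n → Fin K) ⊕ Σ i : Fin n, (Fin (i : ℕ) → Fin K) × (Fin (n - i - 1) → Fin (K + 1)))
    → (Fin n → Fin (K + 1)) :=
  Sum.elim embW (fun x => splice x.1 x.1.isLt x.2.1 x.2.2)

theorem splice_ne_embW {i : ℕ} (hi : i < n) (α : Fin i → Fin K)
    (β : Fin (n - i - 1) → Fin (K + 1)) (σ : Fin n → Fin K) :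
    splice i hi α β ≠ embW σ := by
  intro h
  have := congrFun h ⟨i, hi⟩
  rw [splice_self] at this
  exact (Fin.castSucc_lt_last (σ ⟨i, hi⟩)).ne' this

theorem splice_ne_splice {i i' : ℕ} (hi : i < n) (hi' : i' < n) (h : i < i')
    (α : Fin i → Fin K) (β : Fin (n - i - 1) → Fin (K + 1))
    (α' : Fin i' → Fin K) (β' : Fin (n - i' - 1) → Fin (K + 1)) :
    splice i hi α β ≠ splice i' hi' α' β' := by
  intro he
  have := congrFun he ⟨i, hi⟩
  rw [splice_self, splice_lt hi' α' β' h hi] at this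
  exact (Fin.castSucc_lt_last _).ne' this

theorem FF_injective : Function.Injective (FF (K := K) (n := n)) := by
  rintro (σ | ⟨i, α, β⟩) (σ' | ⟨i', α', β'⟩) h <;>
    simp only [FF, Sum.elim_inl, Sum.elim_inr] at h
  · congr 1
    funext j
    exact Fin.castSucc_injective _ (congrFun h j)
  · exact absurd h.symm (splice_ne_embW i'.isLt α' β' σ)
  · exact absurd h (splice_ne_embW i.isLt α β σ')
  · have hii : i = i' := by
      rcases lt_trichotomy (i : ℕ) (i' : ℕ) with hlt | heq | hlt
      · exact absurd h (splice_ne_splice _ _ hlt _ _ _ _)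
      · exact Fin.ext heq
      · exact absurd h.symm (splice_ne_splice _ _ hlt _ _ _ _)
    subst hii
    have hα : α = α' := by
      funext a
      have h2 := congrFun h ⟨(a : ℕ), lt_trans a.isLt i.isLt⟩
      rw [splice_lt i.isLt α β a.isLt _, splice_lt i.isLt α' β' a.isLt _] at h2
      have h3 := Fin.castSucc_injective _ h2
      simpa using h3
    have hβ : β = β' := by
      funext b
      have h2 := congrFun h ⟨(i : ℕ) + 1 + (b : ℕ), by have := b.isLt; omega⟩
      rw [splice_shift i.isLt α β b.isLt, splice_shift i.isLt α' β' b.isLt] at h2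
      exact h2
    rw [hα, hβ]

theorem FF_surjective : Function.Surjective (FF (K := K) (n := n)) := by
  intro σ
  by_cases h : ∀ j, σ j ≠ Fin.last K
  · refine ⟨Sum.inl (fun j => ⟨(σ j : ℕ), ?_⟩), funext fun j => ?_⟩
    · have h1 := (σ j).isLt
      have h2 : (σ j : ℕ) ≠ K := fun hc => h j (Fin.ext hc)
      omega
    · exact Fin.ext rfl
  · push_neg at h
    obtain ⟨j0, hj0⟩ := h
    have hex : ∃ t : ℕ, ∃ ht : t < n, σ ⟨t, ht⟩ = Fin.last K :=
      ⟨(j0 : ℕ), j0.isLt, by rwa [Fin.eta]⟩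
    classical
    set i := Nat.find hex with hidef
    obtain ⟨hin, hσi⟩ := Nat.find_spec hex
    have hmin : ∀ t, t < i → ∀ ht : t < n, σ ⟨t, ht⟩ ≠ Fin.last K := by
      intro t ht htn
      have h5 := Nat.find_min hex ht
      push_neg at h5
      exact h5 htn
    have hα : ∀ (t : ℕ) (ht : t < i), (σ ⟨t, by omega⟩ : ℕ) < K := by
      intro t ht
      have h1 := (σ ⟨t, by omega⟩).isLt
      have h2 : (σ ⟨t, by omega⟩ : ℕ) ≠ K := fun hc => hmin t ht _ (Fin.ext hc)
      omega
    have main : ∀ (A : Fin i → Fin K) (B : Fin (n - i - 1) → Fin (K + 1)),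
        (∀ a : Fin i, (A a : ℕ) = (σ ⟨(a : ℕ), lt_trans a.isLt hin⟩ : ℕ)) →
        (∀ b : Fin (n - i - 1), B b = σ ⟨i + 1 + (b : ℕ), by have := b.isLt; omega⟩) →
        splice i hin A B = σ := by
      intro A B hA hB
      funext j
      obtain ⟨jv, hjv⟩ := j
      rcases lt_trichotomy jv i with hj | hj | hj
      · rw [splice_lt hin A B hj hjv]
        exact Fin.ext (hA ⟨jv, hj⟩)
      · subst hj
        rw [splice_self hin A B]
        exact hσi.symm
      · rw [splice_gt hin A B hj hjv, hB ⟨jv - i - 1, by omega⟩]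
        apply congrArg
        ext
        simp only [Fin.val_mk]
        omega
    refine ⟨Sum.inr ⟨⟨i, hin⟩,
        fun a => ⟨(σ ⟨(a : ℕ), lt_trans a.isLt hin⟩ : ℕ), hα (a : ℕ) a.isLt⟩,
        fun b => σ ⟨i + 1 + (b : ℕ),
          by have := b.isLt; simp only [Fin.val_mk] at this; omega⟩⟩, ?_⟩
    exact main _ _ (fun a => rfl) (fun b => rfl)

end Bij

section Count

def sumSubtype {A B : Type*} (Q : A ⊕ B → Prop) :
    {x // Q x} ≃ {a // Q (.inl a)} ⊕ {b // Q (.inr b)} where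
  toFun := fun x => match x with
    | ⟨.inl a, h⟩ => .inl ⟨a, h⟩
    | ⟨.inr b, h⟩ => .inr ⟨b, h⟩
  invFun := Sum.elim (fun a => ⟨.inl a.1, a.2⟩) (fun b => ⟨.inr b.1, b.2⟩)
  left_inv := by rintro ⟨x | x, h⟩ <;> rfl
  right_inv := by rintro (⟨a, h⟩ | ⟨b, h⟩) <;> rfl

def sigmaSubtype {ι : Type*} {γ : ι → Type*} (Q : (Σ i, γ i) → Prop) :
    {x // Q x} ≃ Σ i, {y : γ i // Q ⟨i, y⟩} where
  toFun := fun x => ⟨x.1.1, x.1.2, x.2⟩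
  invFun := fun x => ⟨⟨x.1, x.2.1⟩, x.2.2⟩
  left_inv := by rintro ⟨⟨i, y⟩, h⟩; rfl
  right_inv := by rintro ⟨i, y, h⟩; rfl

noncomputable def orSubtype {A : Type*} (p q : A → Prop) (h : ∀ a, ¬ (p a ∧ q a)) :
    {a // p a ∨ q a} ≃ {a // p a} ⊕ {a // q a} := by
  classical
  exact {
    toFun := fun x => if hp : p x.1 then .inl ⟨x.1, hp⟩ else .inr ⟨x.1, x.2.resolve_left hp⟩
    invFun := Sum.elim (fun a => ⟨a.1, Or.inl a.2⟩) (fun b => ⟨b.1, Or.inr b.2⟩)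
    left_inv := by
      rintro ⟨a, ha⟩
      by_cases hp : p a <;> simp [hp]
    right_inv := by
      rintro (⟨a, ha⟩ | ⟨b, hb⟩)
      · simp [ha]
      · have : ¬ p b := fun hp => h b ⟨hp, hb⟩
        simp [this] }

theorem nat_card_sigma {ι : Type*} [Fintype ι] {γ : ι → Type*} [∀ i, Finite (γ i)] :
    Nat.card (Σ i, γ i) = ∑ i, Nat.card (γ i) := by
  letI : ∀ i, Fintype (γ i) := fun i => Fintype.ofFinite _
  simp [Nat.card_eq_fintype_card, Fintype.card_sigma]

variable {K n : ℕ}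

theorem card_split (P : (Fin n → Fin (K + 1)) → Prop) :
    Nat.card {σ : Fin n → Fin (K + 1) // P σ} =
      Nat.card {σ : Fin n → Fin K // P (embW σ)} +
      ∑ i : Fin n, Nat.card {x : (Fin (i : ℕ) → Fin K) × (Fin (n - (i : ℕ) - 1) → Fin (K + 1)) //
        P (splice (i : ℕ) i.isLt x.1 x.2)} := by
  have e1 : {σ : Fin n → Fin (K + 1) // P σ} ≃ {x // P (FF (K := K) (n := n) x)} :=
    ((Equiv.ofBijective _ ⟨FF_injective (K := K) (n := n), FF_surjective⟩).subtypeEquiv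
      (fun x => Iff.rfl)).symm
  have e2 := e1.trans (sumSubtype (fun x => P (FF x)))
  have e3 := e2.trans (Equiv.sumCongr (Equiv.refl _)
    (sigmaSubtype (fun x => P (FF (Sum.inr x)))))
  rw [Nat.card_congr e3, Nat.card_sum, nat_card_sigma]
  rfl

end Count

section Count2

theorem card_or_prod {A B : Type*} [Finite A] [Finite B] (p1 p3 : A → Prop) (p2 p4 : B → Prop)
    (hdis : ∀ a, ¬ (p1 a ∧ p3 a)) :
    Nat.card {x : A × B // (p1 x.1 ∧ p2 x.2) ∨ (p3 x.1 ∧ p4 x.2)} =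
      Nat.card {a // p1 a} * Nat.card {b // p2 b} +
        Nat.card {a // p3 a} * Nat.card {b // p4 b} := by
  rw [Nat.card_congr (orSubtype _ _ (fun x hx => hdis x.1 ⟨hx.1.1, hx.2.1⟩)), Nat.card_sum,
    Nat.card_congr (Equiv.subtypeProdEquivProd), Nat.card_congr (Equiv.subtypeProdEquivProd),
    Nat.card_prod, Nat.card_prod]

variable {m r : ℕ} (τ : Fin m → Fin r)

noncomputable def aseq (K n : ℕ) : ℕ :=
  Nat.card {σ : Fin n → Fin K // ¬ ContainsShuffle τ τ σ}

noncomputable def bseq (K n : ℕ) : ℕ :=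
  Nat.card {σ : Fin n → Fin K // AvoidsPat τ σ}

noncomputable def eseq (K n : ℕ) : ℕ :=
  Nat.card {σ : Fin n → Fin K // ¬ ContainsShuffle τ τ σ ∧ ¬ AvoidsPat τ σ}

noncomputable def dseq (K n : ℕ) : ℕ :=
  Nat.card {σ : Fin n → Fin (K + 1) // DP τ σ}

theorem not_cs_splice_iff {K n : ℕ} {i : ℕ} {hi : i < n} {α : Fin i → Fin K}
    {β : Fin (n - i - 1) → Fin (K + 1)} :
    ¬ ContainsShuffle τ τ (splice i hi α β) ↔
      ((AvoidsPat τ α ∧ ¬ ContainsShuffle τ τ β) ∨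
       ((¬ ContainsShuffle τ τ α ∧ ¬ AvoidsPat τ α) ∧ DP τ β)) := by
  rw [cs_splice_iff]
  constructor
  · intro h
    push_neg at h
    obtain ⟨h1, h2, h3⟩ := h
    by_cases ha : AvoidsPat τ α
    · exact Or.inl ⟨ha, h2⟩
    · exact Or.inr ⟨⟨h1, ha⟩, h3 ha⟩
  · rintro (⟨h1, h2⟩ | ⟨⟨h1, h2⟩, h3⟩)
    · rintro (h | h | ⟨h4, h5⟩)
      exacts [avoids_not_cs τ h1 h, h2 h, h4 h1]
    · rintro (h | h | ⟨h4, h5⟩)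
      exacts [h1 h, dp_not_cs τ h3 h, h5 h3]

theorem L1 (K n : ℕ) : aseq τ K n = bseq τ K n + eseq τ K n := by
  have hiff : ∀ σ : Fin n → Fin K, ¬ ContainsShuffle τ τ σ ↔
      (AvoidsPat τ σ ∨ (¬ ContainsShuffle τ τ σ ∧ ¬ AvoidsPat τ σ)) := by
    intro σ
    constructor
    · intro h
      by_cases ha : AvoidsPat τ σ
      · exact Or.inl ha
      · exact Or.inr ⟨h, ha⟩
    · rintro (h | ⟨h, -⟩)
      · exact avoids_not_cs τ h
      · exact h
  rw [aseq, Nat.card_congr ((Equiv.subtypeEquivRight hiff).trans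
    (orSubtype _ _ (fun σ h => h.2.2 h.1))), Nat.card_sum]
  rfl

theorem L2 (K n : ℕ) : aseq τ (K + 1) n = aseq τ K n +
    ∑ i ∈ Finset.range n, (bseq τ K i * aseq τ (K + 1) (n - i - 1) +
      eseq τ K i * dseq τ K (n - i - 1)) := by
  rw [aseq, card_split (fun σ => ¬ ContainsShuffle τ τ σ)]
  congr 1
  rw [← Fin.sum_univ_eq_sum_range]
  apply Finset.sum_congr rfl
  intro i _
  rw [Nat.card_congr (Equiv.subtypeEquivRight (fun x => not_cs_splice_iff τ)),
    card_or_prod (fun a => AvoidsPat τ a) (fun a => ¬ ContainsShuffle τ τ a ∧ ¬ AvoidsPat τ a)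
      (fun b => ¬ ContainsShuffle τ τ b) (fun b => DP τ b) (fun a h => h.2.2 h.1),
    bseq, aseq, eseq, dseq]

theorem L3 (K n : ℕ) : dseq τ K n = bseq τ K n +
    ∑ i ∈ Finset.range n, bseq τ K i * dseq τ K (n - i - 1) := by
  rw [dseq, card_split (fun σ => DP τ σ)]
  congr 1
  · rw [bseq]
    exact Nat.card_congr (Equiv.subtypeEquivRight (fun σ => dp_embW τ))
  · rw [← Fin.sum_univ_eq_sum_range]
    apply Finset.sum_congr rfl
    intro i _
    rw [Nat.card_congr (Equiv.subtypeEquivRight (fun x => dp_splice_iff τ)),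
      Nat.card_congr (Equiv.subtypeProdEquivProd), Nat.card_prod, bseq, dseq]

end Count2

section PS
variable {m r : ℕ} (τ : Fin m → Fin r)

noncomputable def Dps (K : ℕ) : PowerSeries ℚ := PowerSeries.mk fun n => (dseq τ K n : ℚ)
noncomputable def Eps (K : ℕ) : PowerSeries ℚ := PowerSeries.mk fun n => (eseq τ K n : ℚ)

theorem coeff_Ashuffle (k n : ℕ) :
    PowerSeries.coeff n (Ashuffle τ τ k) = (aseq τ k n : ℚ) := by
  simp [Ashuffle, aseq, PowerSeries.coeff_mk]

theorem coeff_Apat (k n : ℕ) :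
    PowerSeries.coeff n (Apat τ k) = (bseq τ k n : ℚ) := by
  simp [Apat, bseq, PowerSeries.coeff_mk]

theorem coeff_Dps (K n : ℕ) : PowerSeries.coeff n (Dps τ K) = (dseq τ K n : ℚ) := by
  simp [Dps, PowerSeries.coeff_mk]

theorem coeff_Eps (K n : ℕ) : PowerSeries.coeff n (Eps τ K) = (eseq τ K n : ℚ) := by
  simp [Eps, PowerSeries.coeff_mk]

theorem hps3 (K : ℕ) : Ashuffle τ τ K = Apat τ K + Eps τ K := by
  ext n
  rw [map_add, coeff_Ashuffle, coeff_Apat, coeff_Eps]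
  exact_mod_cast L1 τ K n

theorem hps2 (K : ℕ) : Dps τ K = Apat τ K + PowerSeries.X * (Apat τ K * Dps τ K) := by
  ext n
  rw [map_add, coeff_Dps, coeff_Apat]
  cases n with
  | zero =>
    have h0 : (PowerSeries.coeff 0) (PowerSeries.X * (Apat τ K * Dps τ K)) = 0 := by
      rw [mul_comm PowerSeries.X, PowerSeries.coeff_zero_mul_X]
    rw [h0, L3 τ K 0]
    simp
  | succ n =>
    rw [PowerSeries.coeff_succ_X_mul, PowerSeries.coeff_mul,
      Finset.Nat.sum_antidiagonal_eq_sum_range_succ_mk, L3 τ K (n + 1)]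
    push_cast
    congr 1
    apply Finset.sum_congr rfl
    intro i hi
    rw [Finset.mem_range] at hi
    rw [coeff_Apat, coeff_Dps]
    have : n + 1 - i - 1 = n - i := by omega
    rw [this]

theorem hps1 (K : ℕ) : Ashuffle τ τ (K + 1) = Ashuffle τ τ K +
    PowerSeries.X * (Eps τ K * Dps τ K + Apat τ K * Ashuffle τ τ (K + 1)) := by
  ext n
  rw [map_add, coeff_Ashuffle, coeff_Ashuffle]
  cases n with
  | zero =>
    have h0 : (PowerSeries.coeff 0)
        (PowerSeries.X * (Eps τ K * Dps τ K + Apat τ K * Ashuffle τ τ (K + 1))) = 0 := by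
      rw [mul_comm PowerSeries.X, PowerSeries.coeff_zero_mul_X]
    rw [h0, L2 τ K 0]
    simp
  | succ n =>
    rw [PowerSeries.coeff_succ_X_mul, map_add, PowerSeries.coeff_mul, PowerSeries.coeff_mul,
      Finset.Nat.sum_antidiagonal_eq_sum_range_succ_mk,
      Finset.Nat.sum_antidiagonal_eq_sum_range_succ_mk, L2 τ K (n + 1)]
    push_cast
    rw [← Finset.sum_add_distrib]
    congr 1
    apply Finset.sum_congr rfl
    intro i hi
    rw [Finset.mem_range] at hi
    rw [coeff_Apat, coeff_Ashuffle, coeff_Eps, coeff_Dps]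
    have h5 : n + 1 - i - 1 = n - i := by omega
    rw [h5]
    ring

end PS

theorem stmt4 (m r : ℕ) (τ : Fin m → Fin r) (k : ℕ) (hk : 1 ≤ k) :
    Ashuffle τ τ k * (1 - PowerSeries.X * Apat τ (k - 1)) ^ 2 =
      Ashuffle τ τ (k - 1) - PowerSeries.X * Apat τ (k - 1) ^ 2 := by
  obtain ⟨K, rfl⟩ : ∃ K, k = K + 1 := ⟨k - 1, by omega⟩
  have hK : K + 1 - 1 = K := by omega
  rw [hK]
  have h1 := hps1 τ K
  have h2 := hps2 τ K
  have h3 := hps3 τ K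
  linear_combination (1 - PowerSeries.X * Apat τ K) * h1 + PowerSeries.X * Eps τ K * h2 -
    PowerSeries.X * Apat τ K * h3
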